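/- If G is a finite non-abelian group, then the number of 4-tuples (g₁,g₂,g₃,g₄) in G⁴ with g₁g₂g₃g₁⁻¹g₄g₃⁻¹g₂⁻¹g₄⁻¹ = 1 is at most (5/8)·|G|⁴. -/

import Mathlib

open Subgroup

private lemma aux_center_le (G : Type*) [Group G] [Finite G]
    (h : ¬ ∀ g h : G, g * h = h * g) :
    4 * Nat.card (center G) ≤ Nat.card G := by
  have hi : 4 ≤ (center G).index := by
    by_contra hlt
    push_neg at hlt
    have hne : (center G).index ≠ 0 := Subgroup.index_ne_zero_of_finite
    have hcard : Nat.card (G ⧸ center G) = (center G).index := by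
      rw [Subgroup.index]
    have hcyc : IsCyclic (G ⧸ center G) := by
      interval_cases hI : (center G).index
      · omega
      · have : Nat.card (G ⧸ center G) = 1 := by omega
        have := Nat.card_eq_one_iff_unique.mp this
        exact @isCyclic_of_subsingleton _ _ this.1
      · exact isCyclic_of_prime_card (p := 2) (by omega)
      · exact isCyclic_of_prime_card (p := 3) (by omega)
    exact h (commutative_of_cyclic_center_quotient (QuotientGroup.mk' (center G))
      (le_of_eq (QuotientGroup.ker_mk' _)))
  calc 4 * Nat.card (center G) ≤ (center G).index * Nat.card (center G) :=
        Nat.mul_le_mul_right _ hi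
    _ = Nat.card G := by rw [mul_comm, Subgroup.card_mul_index]

private lemma aux_comm_bound (G : Type*) [Group G] [Finite G]
    (hz : 4 * Nat.card (center G) ≤ Nat.card G) :
    8 * Nat.card { p : G × G // Commute p.1 p.2 } ≤ 5 * Nat.card G ^ 2 := by
  classical
  have := Fintype.ofFinite G
  have hN : Nat.card { p : G × G // Commute p.1 p.2 }
      = ∑ g : G, Nat.card (centralizer {g} : Subgroup G) := by
    rw [Nat.card_eq_fintype_card]
    rw [Fintype.card_congr (Equiv.subtypeProdEquivSigmaSubtype (fun a b : G => Commute a b))]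
    rw [Fintype.card_sigma]
    refine Finset.sum_congr rfl fun g _ => ?_
    rw [Nat.card_eq_fintype_card]
    exact Fintype.card_congr (Equiv.subtypeEquivRight fun k => by
      simp [Subgroup.mem_centralizer_singleton_iff, Commute, SemiconjBy, eq_comm])
  have hterm : ∀ g : G, 2 * Nat.card (centralizer {g} : Subgroup G) ≤
      Nat.card G + (if g ∈ center G then Nat.card G else 0) := by
    intro g
    by_cases hg : g ∈ center G
    · simp only [hg, if_pos]
      have : Nat.card (centralizer {g} : Subgroup G) ≤ Nat.card G :=
        Nat.card_le_card_of_injective _ Subtype.val_injective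
      omega
    · simp only [hg, if_neg, not_false_iff, add_zero]
      have hne : (centralizer {g} : Subgroup G) ≠ ⊤ := by
        intro ht
        exact hg (Subgroup.mem_center_iff.mpr fun k => by
          have : k ∈ centralizer {g} := ht ▸ Subgroup.mem_top k
          exact (Subgroup.mem_centralizer_singleton_iff.mp this))
      have hi2 : 2 ≤ (centralizer {g} : Subgroup G).index := by
        have h0 : (centralizer {g} : Subgroup G).index ≠ 0 := Subgroup.index_ne_zero_of_finite
        have h1 : (centralizer {g} : Subgroup G).index ≠ 1 := fun e => hne (Subgroup.index_eq_one.mp e)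
        omega
      calc 2 * Nat.card (centralizer {g} : Subgroup G)
          ≤ (centralizer {g} : Subgroup G).index * Nat.card (centralizer {g} : Subgroup G) :=
            Nat.mul_le_mul_right _ hi2
        _ = Nat.card G := by rw [mul_comm, Subgroup.card_mul_index]
  have hsum : 2 * Nat.card { p : G × G // Commute p.1 p.2 } ≤
      Nat.card G * Nat.card G + Nat.card (center G) * Nat.card G := by
    rw [hN, Finset.mul_sum]
    calc ∑ g : G, 2 * Nat.card (centralizer {g} : Subgroup G)
        ≤ ∑ g : G, (Nat.card G + if g ∈ center G then Nat.card G else 0) :=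
          Finset.sum_le_sum fun g _ => hterm g
      _ = Nat.card G * Nat.card G + Nat.card (center G) * Nat.card G := by
          rw [Finset.sum_add_distrib, Finset.sum_const, ← Finset.sum_filter,
            Finset.sum_const, smul_eq_mul, smul_eq_mul, Nat.card_eq_fintype_card,
            Nat.card_eq_fintype_card, Fintype.card_subtype]
          rfl
  nlinarith [hsum, hz, Nat.zero_le (Nat.card G)]

private lemma aux_card_eq (G : Type*) [Group G] [Finite G] :
    Nat.card { t : G × G × G × G //
        t.1 * t.2.1 * t.2.2.1 * t.1⁻¹ * t.2.2.2 * t.2.2.1⁻¹ * t.2.1⁻¹ * t.2.2.2⁻¹ = 1 }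
      = Nat.card G * (Nat.card G * Nat.card { p : G × G // Commute p.1 p.2 }) := by
  have key : ∀ a b c d : G,
      a * b * c * a⁻¹ * d * c⁻¹ * b⁻¹ * d⁻¹ = 1 ↔ (d⁻¹ * a) * (b * c) = (b * c) * (d⁻¹ * a) := by
    intro a b c d
    constructor
    · intro h
      have h' : a * b * c * a⁻¹ * d = d * (b * c) := by
        have := congrArg (· * (d * b * c)) h
        simpa [mul_assoc] using this
      have := congrArg (fun x => d⁻¹ * x * (a⁻¹ * d)⁻¹) h'
      simpa [mul_assoc] using this
    · intro h
      have h' : a * b * c * a⁻¹ * d = d * (b * c) := by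
        have := congrArg (fun x => d * x * (a⁻¹ * d)) h
        simpa [mul_assoc] using this
      rw [show a * b * c * a⁻¹ * d * c⁻¹ * b⁻¹ * d⁻¹
          = (a * b * c * a⁻¹ * d) * (c⁻¹ * (b⁻¹ * d⁻¹)) by group, h']
      group
  have e : { t : G × G × G × G //
        t.1 * t.2.1 * t.2.2.1 * t.1⁻¹ * t.2.2.2 * t.2.2.1⁻¹ * t.2.1⁻¹ * t.2.2.2⁻¹ = 1 }
      ≃ G × G × { p : G × G // Commute p.1 p.2 } := {
    toFun := fun t => (t.1.2.2.2, t.1.2.2.1,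
      ⟨(t.1.2.2.2⁻¹ * t.1.1, t.1.2.1 * t.1.2.2.1), (key _ _ _ _).mp t.2⟩)
    invFun := fun x => ⟨(x.1 * x.2.2.1.1, x.2.2.1.2 * x.2.1⁻¹, x.2.1, x.1),
      (key _ _ _ _).mpr (by simpa [mul_assoc] using x.2.2.2.eq)⟩
    left_inv := fun t => by
      obtain ⟨⟨a, b, c, d⟩, ht⟩ := t
      ext <;> simp [mul_assoc]
    right_inv := fun x => by
      obtain ⟨u, v, ⟨⟨p, q⟩, hpq⟩⟩ := x
      ext <;> simp [mul_assoc]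
  }
  rw [Nat.card_congr e, Nat.card_prod, Nat.card_prod]

theorem card_surface_word_le_five_eighths (G : Type*) [Group G] [Finite G]
    (h : ¬ ∀ g h : G, g * h = h * g) :
    (Nat.card { t : G × G × G × G //
        t.1 * t.2.1 * t.2.2.1 * t.1⁻¹ * t.2.2.2 * t.2.2.1⁻¹ * t.2.1⁻¹ * t.2.2.2⁻¹ = 1 } : ℚ) ≤
      5 / 8 * (Nat.card G : ℚ) ^ 4 := by
  have hcomm := aux_comm_bound G (aux_center_le G h)
  have hnat : 8 * Nat.card { t : G × G × G × G //
        t.1 * t.2.1 * t.2.2.1 * t.1⁻¹ * t.2.2.2 * t.2.2.1⁻¹ * t.2.1⁻¹ * t.2.2.2⁻¹ = 1 }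
      ≤ 5 * Nat.card G ^ 4 := by
    rw [aux_card_eq G]
    nlinarith [hcomm, Nat.zero_le (Nat.card G)]
  have hq : (8 : ℚ) * (Nat.card { t : G × G × G × G //
        t.1 * t.2.1 * t.2.2.1 * t.1⁻¹ * t.2.2.2 * t.2.2.1⁻¹ * t.2.1⁻¹ * t.2.2.2⁻¹ = 1 } : ℚ)
      ≤ 5 * (Nat.card G : ℚ) ^ 4 := by exact_mod_cast hnat
  linarith
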